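/- arXiv:1902.11200 — 2 statements merged into one kernel-verified Lean document; each statement's English description precedes it below -/
import Mathlib

section
/- If there exist a positive definite matrix P and λ ∈ (0,1) such that E[λ² P − A(ξ_0)ᵀ P A(ξ_0)] is positive semidefinite, then for every deterministic initial state x_0 the system x_{k+1} = A(ξ_k) x_k satisfies E[x_{k+1}ᵀ P x_{k+1}] ≤ λ² E[x_kᵀ P x_k] for all k ∈ ℕ (i.e., the system is quadratically stable). -/
open MeasureTheory ProbabilityTheory Matrix

local instance {k l : ℕ} : MeasurableSpace (Matrix (Fin k) (Fin l) ℝ) :=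
  inferInstanceAs (MeasurableSpace ((Fin k) → (Fin l) → ℝ))

private lemma memLp_mul_integrable {Ω : Type*} [MeasurableSpace Ω] {μ : Measure Ω}
    {f g : Ω → ℝ} (hf : MemLp f 2 μ) (hg : MemLp g 2 μ) :
    Integrable (fun ω => f ω * g ω) μ := by
  have h : MemLp (f • g) 1 μ := hg.smul hf
  exact memLp_one_iff_integrable.1 h

private lemma quad_eq {n : ℕ} (N : Matrix (Fin n) (Fin n) ℝ) (v : Fin n → ℝ) :
    v ⬝ᵥ (N *ᵥ v) = ∑ a, ∑ b, v a * v b * N a b := by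
  simp only [dotProduct, mulVec, Finset.mul_sum]
  exact Finset.sum_congr rfl fun a _ => Finset.sum_congr rfl fun b _ => by ring

private lemma quad_mulVec {n : ℕ} (M P : Matrix (Fin n) (Fin n) ℝ) (v : Fin n → ℝ) :
    (M *ᵥ v) ⬝ᵥ (P *ᵥ (M *ᵥ v)) = ∑ a, ∑ b, v a * v b * (Mᵀ * P * M) a b := by
  rw [← quad_eq]
  rw [← mulVec_mulVec, ← mulVec_mulVec, Matrix.dotProduct_mulVec v, vecMul_transpose]

/-- The solution of the recursion as an explicit function of the noise sequence. -/
private def Fseq {Z n : ℕ} (A : (Fin Z → ℝ) → Matrix (Fin n) (Fin n) ℝ) (x0 : Fin n → ℝ) :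
    (k : ℕ) → (Fin k → (Fin Z → ℝ)) → (Fin n → ℝ)
  | 0, _ => x0
  | (k+1), v => A (v (Fin.last k)) *ᵥ Fseq A x0 k (fun i => v i.castSucc)

private lemma Fseq_measurable {Z n : ℕ} {A : (Fin Z → ℝ) → Matrix (Fin n) (Fin n) ℝ}
    (hA : Measurable A) (x0 : Fin n → ℝ) : ∀ k, Measurable (Fseq A x0 k)
  | 0 => measurable_const
  | (k+1) => by
    have ih := Fseq_measurable hA x0 k
    have hrestr : Measurable (fun v : Fin (k+1) → (Fin Z → ℝ) =>
        fun i : Fin k => v i.castSucc) :=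
      measurable_pi_lambda _ (fun i => measurable_pi_apply _)
    apply measurable_pi_lambda
    intro i
    simp only [Fseq, mulVec, dotProduct]
    refine Finset.measurable_sum _ fun j _ => ?_
    have h1 : Measurable (fun v : Fin (k+1) → (Fin Z → ℝ) => A (v (Fin.last k)) i j) :=
      ((measurable_pi_apply j).comp ((measurable_pi_apply i).comp hA)).comp
        (measurable_pi_apply _)
    exact h1.mul ((measurable_pi_apply j).comp (ih.comp hrestr))

/-- If `E[λ²P − A(ξ₀)ᵀPA(ξ₀)]` is positive semidefinite, then the system
`x_{k+1} = A(ξ_k)x_k` satisfies `E[x_{k+1}ᵀPx_{k+1}] ≤ λ²E[x_kᵀPx_k]` for all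
deterministic initial states. -/
theorem lyapunov_inequality_implies_quadratic_stability
    {Ω : Type*} [MeasurableSpace Ω] (μ : Measure Ω) [IsProbabilityMeasure μ]
    {Z n : ℕ} (ξ : ℕ → Ω → (Fin Z → ℝ)) (hξm : ∀ k, Measurable (ξ k))
    (hindep : iIndepFun ξ μ)
    (hident : ∀ k, Measure.map (ξ k) μ = Measure.map (ξ 0) μ)
    (A : (Fin Z → ℝ) → Matrix (Fin n) (Fin n) ℝ) (hA : Measurable A)
    (hAsq : ∀ i j, Integrable (fun ω => (A (ξ 0 ω) i j) ^ 2) μ)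
    (x : (Fin n → ℝ) → ℕ → Ω → (Fin n → ℝ))
    (hx0 : ∀ x0, x x0 0 = fun _ => x0)
    (hxrec : ∀ x0 k ω, x x0 (k + 1) ω = A (ξ k ω) *ᵥ x x0 k ω)
    (P : Matrix (Fin n) (Fin n) ℝ) (hP : P.PosDef)
    (lam : ℝ) (hlam : lam ∈ Set.Ioo (0 : ℝ) 1)
    (hLyap : Matrix.PosSemidef (Matrix.of fun i j =>
      ∫ ω, (lam ^ 2 • P - (A (ξ 0 ω))ᵀ * P * A (ξ 0 ω)) i j ∂μ)) :
    ∀ (x0 : Fin n → ℝ) (k : ℕ),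
      (∫ ω, x x0 (k + 1) ω ⬝ᵥ (P *ᵥ x x0 (k + 1) ω) ∂μ)
        ≤ lam ^ 2 * ∫ ω, x x0 k ω ⬝ᵥ (P *ᵥ x x0 k ω) ∂μ := by
  intro x0 k
  set y := x x0 with hy
  -- entry measurability of A
  have hAe : ∀ i j, Measurable (fun v => A v i j) := fun i j =>
    (measurable_pi_apply j).comp ((measurable_pi_apply i).comp hA)
  -- y as a function of the noise
  have hyF : ∀ m ω, y m ω = Fseq A x0 m (fun i : Fin m => ξ i ω) := by
    intro m
    induction m with
    | zero => intro ω; simp [hy, hx0, Fseq]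
    | succ m ih =>
      intro ω
      have : y (m + 1) ω = A (ξ m ω) *ᵥ y m ω := hxrec x0 m ω
      rw [this, ih ω]
      simp [Fseq, Fin.val_last, Fin.coe_castSucc]
  have hyrec : ∀ m ω, y (m+1) ω = A (ξ m ω) *ᵥ y m ω := fun m ω => hxrec x0 m ω
  -- measurability of y m
  have hym : ∀ m, Measurable (y m) := by
    intro m
    have : y m = fun ω => Fseq A x0 m (fun i : Fin m => ξ i ω) := funext (hyF m)
    rw [this]
    exact (Fseq_measurable hA x0 m).comp
      (measurable_pi_lambda _ fun i => hξm i)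
  -- independence of y m and ξ m
  have hInd : ∀ m, IndepFun (y m) (ξ m) μ := by
    intro m
    have hdisj : Disjoint (Finset.range m) ({m} : Finset ℕ) := by
      simp only [Finset.disjoint_left, Finset.mem_range, Finset.mem_singleton]
      omega
    have h := hindep.indepFun_finset (Finset.range m) {m} hdisj hξm
    have hφ : Measurable (fun w : {a : ℕ // a ∈ Finset.range m} → (Fin Z → ℝ) =>
        Fseq A x0 m (fun i : Fin m =>
          w ⟨(i : ℕ), Finset.mem_range.2 i.isLt⟩)) :=
      (Fseq_measurable hA x0 m).comp
        (measurable_pi_lambda _ fun i => measurable_pi_apply _)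
    have hψ : Measurable (fun w : {a : ℕ // a ∈ ({m} : Finset ℕ)} → (Fin Z → ℝ) =>
        w ⟨m, Finset.mem_singleton_self m⟩) := measurable_pi_apply _
    have h2 := h.comp hφ hψ
    have e1 : (fun w : {a : ℕ // a ∈ Finset.range m} → (Fin Z → ℝ) =>
        Fseq A x0 m (fun i : Fin m => w ⟨(i : ℕ), Finset.mem_range.2 i.isLt⟩))
          ∘ (fun a (i : {a : ℕ // a ∈ Finset.range m}) => ξ i a) = y m := by
      funext ω
      simp only [Function.comp_apply]
      rw [hyF m ω]
    have e2 : (fun w : {a : ℕ // a ∈ ({m} : Finset ℕ)} → (Fin Z → ℝ) =>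
        w ⟨m, Finset.mem_singleton_self m⟩)
          ∘ (fun a (i : {a : ℕ // a ∈ ({m} : Finset ℕ)}) => ξ i a) = ξ m := rfl
    rwa [e1, e2] at h2
  -- L² entries of A ∘ ξ m
  have hL2 : ∀ m i j, MemLp (fun ω => A (ξ m ω) i j) 2 μ := by
    intro m i j
    have h0 : MemLp (fun ω => A (ξ 0 ω) i j) 2 μ :=
      (memLp_two_iff_integrable_sq
        ((hAe i j).comp (hξm 0)).aestronglyMeasurable).2 (hAsq i j)
    have hmap0 : MemLp (fun v => A v i j) 2 (Measure.map (ξ 0) μ) :=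
      (memLp_map_measure_iff (hAe i j).aestronglyMeasurable
        (hξm 0).aemeasurable).2 h0
    have hmapm : MemLp (fun v => A v i j) 2 (Measure.map (ξ m) μ) := by
      rw [hident m]; exact hmap0
    exact (memLp_map_measure_iff (hAe i j).aestronglyMeasurable
      (hξm m).aemeasurable).1 hmapm
  -- integrability of products of entries of A ∘ ξ m
  have hAA : ∀ m a i b j, Integrable (fun ω => A (ξ m ω) a i * A (ξ m ω) b j) μ :=
    fun m a i b j => memLp_mul_integrable (hL2 m a i) (hL2 m b j)
  -- integrability of products of entries of y m
  have hyy : ∀ m a b, Integrable (fun ω => y m ω a * y m ω b) μ := by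
    intro m
    induction m with
    | zero =>
      intro a b
      have : (fun ω => y 0 ω a * y 0 ω b) = fun _ => x0 a * x0 b := by
        funext ω; simp [hy, hx0]
      rw [this]; exact integrable_const _
    | succ m ih =>
      intro a b
      have hexp : (fun ω => y (m+1) ω a * y (m+1) ω b)
          = fun ω => ∑ i, ∑ j,
              (A (ξ m ω) a i * A (ξ m ω) b j) * (y m ω i * y m ω j) := by
        funext ω
        rw [hyrec m ω]
        simp only [mulVec, dotProduct, Finset.sum_mul, Finset.mul_sum]
        rw [Finset.sum_comm]
        exact Finset.sum_congr rfl fun i _ => Finset.sum_congr rfl fun j _ => by ring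
      rw [hexp]
      apply integrable_finset_sum
      intro i _
      apply integrable_finset_sum
      intro j _
      have hind : IndepFun (fun ω => A (ξ m ω) a i * A (ξ m ω) b j)
          (fun ω => y m ω i * y m ω j) μ :=
        ((hInd m).symm).comp ((hAe a i).mul (hAe b j))
          ((measurable_pi_apply i).mul (measurable_pi_apply j))
      exact hind.integrable_mul (hAA m a i b j) (ih i j)
  -- integrability of the entries of AᵀPA ∘ ξ m
  have hMexp : ∀ m a b (ω : Ω), ((A (ξ m ω))ᵀ * P * A (ξ m ω)) a b
      = ∑ j, ∑ i, P i j * (A (ξ m ω) i a * A (ξ m ω) j b) := by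
    intro m a b ω
    simp only [Matrix.mul_apply, transpose_apply, Finset.sum_mul]
    exact Finset.sum_congr rfl fun j _ => Finset.sum_congr rfl fun i _ => by ring
  have hMint : ∀ m a b, Integrable (fun ω => ((A (ξ m ω))ᵀ * P * A (ξ m ω)) a b) μ := by
    intro m a b
    have : (fun ω => ((A (ξ m ω))ᵀ * P * A (ξ m ω)) a b)
        = fun ω => ∑ j, ∑ i, P i j * (A (ξ m ω) i a * A (ξ m ω) j b) :=
      funext fun ω => hMexp m a b ω
    rw [this]
    exact integrable_finset_sum _ fun j _ => integrable_finset_sum _ fun i _ =>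
      ((hAA m i a j b).const_mul _)
  -- measurability of the entries of v ↦ AᵀPA
  have hgm : ∀ a b, Measurable (fun v => ((A v)ᵀ * P * A v) a b) := by
    intro a b
    have : (fun v => ((A v)ᵀ * P * A v) a b)
        = fun v => ∑ j, ∑ i, P i j * (A v i a * A v j b) := by
      funext v
      simp only [Matrix.mul_apply, transpose_apply, Finset.sum_mul]
      exact Finset.sum_congr rfl fun j _ => Finset.sum_congr rfl fun i _ => by ring
    rw [this]
    exact Finset.measurable_sum _ fun j _ => Finset.measurable_sum _ fun i _ =>
      (measurable_const.mul ((hAe i a).mul (hAe j b)))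
  -- the averaged matrix Q
  set Q : Matrix (Fin n) (Fin n) ℝ :=
    Matrix.of (fun a b => ∫ ω, ((A (ξ 0 ω))ᵀ * P * A (ξ 0 ω)) a b ∂μ) with hQ
  have hQeq : ∀ m a b, (∫ ω, ((A (ξ m ω))ᵀ * P * A (ξ m ω)) a b ∂μ) = Q a b := by
    intro m a b
    calc (∫ ω, ((A (ξ m ω))ᵀ * P * A (ξ m ω)) a b ∂μ)
        = ∫ v, ((A v)ᵀ * P * A v) a b ∂(Measure.map (ξ m) μ) :=
          (integral_map (hξm m).aemeasurable (hgm a b).aestronglyMeasurable).symm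
      _ = ∫ v, ((A v)ᵀ * P * A v) a b ∂(Measure.map (ξ 0) μ) := by rw [hident m]
      _ = ∫ ω, ((A (ξ 0 ω))ᵀ * P * A (ξ 0 ω)) a b ∂μ :=
          integral_map (hξm 0).aemeasurable (hgm a b).aestronglyMeasurable
      _ = Q a b := rfl
  -- hLyap rewritten
  have hR : Matrix.PosSemidef (lam ^ 2 • P - Q) := by
    have heq : (Matrix.of fun i j =>
        ∫ ω, (lam ^ 2 • P - (A (ξ 0 ω))ᵀ * P * A (ξ 0 ω)) i j ∂μ)
        = lam ^ 2 • P - Q := by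
      ext i j
      simp only [Matrix.of_apply, Matrix.sub_apply, Matrix.smul_apply, smul_eq_mul]
      rw [integral_sub (integrable_const _) (hMint 0 i j)]
      simp [hQ]
    rwa [heq] at hLyap
  -- second moments of y k
  set S : Fin n → Fin n → ℝ := fun a b => ∫ ω, y k ω a * y k ω b ∂μ with hS
  -- independence and integrability of the product terms
  have hIndM : ∀ a b, IndepFun (fun ω => y k ω a * y k ω b)
      (fun ω => ((A (ξ k ω))ᵀ * P * A (ξ k ω)) a b) μ := fun a b =>
    (hInd k).comp ((measurable_pi_apply a).mul (measurable_pi_apply b)) (hgm a b)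
  have hprodint : ∀ a b, Integrable
      (fun ω => (y k ω a * y k ω b) * ((A (ξ k ω))ᵀ * P * A (ξ k ω)) a b) μ :=
    fun a b => (hIndM a b).integrable_mul (hyy k a b) (hMint k a b)
  -- E1 : the left-hand side
  have hE1 : (∫ ω, y (k+1) ω ⬝ᵥ (P *ᵥ y (k+1) ω) ∂μ)
      = ∑ a, ∑ b, S a b * Q a b := by
    have hpt : ∀ ω, y (k+1) ω ⬝ᵥ (P *ᵥ y (k+1) ω)
        = ∑ a, ∑ b, (y k ω a * y k ω b) * ((A (ξ k ω))ᵀ * P * A (ξ k ω)) a b := by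
      intro ω
      rw [hyrec k ω]
      exact quad_mulVec (A (ξ k ω)) P (y k ω)
    calc (∫ ω, y (k+1) ω ⬝ᵥ (P *ᵥ y (k+1) ω) ∂μ)
        = ∫ ω, ∑ a, ∑ b,
            (y k ω a * y k ω b) * ((A (ξ k ω))ᵀ * P * A (ξ k ω)) a b ∂μ :=
          integral_congr_ae (Filter.Eventually.of_forall hpt)
      _ = ∑ a, ∫ ω, ∑ b,
            (y k ω a * y k ω b) * ((A (ξ k ω))ᵀ * P * A (ξ k ω)) a b ∂μ :=
          integral_finset_sum _ fun a _ => integrable_finset_sum _ fun b _ => hprodint a b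
      _ = ∑ a, ∑ b, ∫ ω,
            (y k ω a * y k ω b) * ((A (ξ k ω))ᵀ * P * A (ξ k ω)) a b ∂μ :=
          Finset.sum_congr rfl fun a _ => integral_finset_sum _ fun b _ => hprodint a b
      _ = ∑ a, ∑ b, S a b * Q a b := by
          refine Finset.sum_congr rfl fun a _ => Finset.sum_congr rfl fun b _ => ?_
          have h := (hIndM a b).integral_mul_eq_mul_integral (hyy k a b).aestronglyMeasurable
            (hMint k a b).aestronglyMeasurable
          rw [hQeq k a b] at h
          exact h
  -- E2 : the right-hand side
  have hE2 : (∫ ω, y k ω ⬝ᵥ (P *ᵥ y k ω) ∂μ) = ∑ a, ∑ b, S a b * P a b := by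
    calc (∫ ω, y k ω ⬝ᵥ (P *ᵥ y k ω) ∂μ)
        = ∫ ω, ∑ a, ∑ b, (y k ω a * y k ω b) * P a b ∂μ :=
          integral_congr_ae (Filter.Eventually.of_forall fun ω => quad_eq P (y k ω))
      _ = ∑ a, ∫ ω, ∑ b, (y k ω a * y k ω b) * P a b ∂μ :=
          integral_finset_sum _ fun a _ => integrable_finset_sum _ fun b _ =>
            (hyy k a b).mul_const _
      _ = ∑ a, ∑ b, ∫ ω, (y k ω a * y k ω b) * P a b ∂μ :=
          Finset.sum_congr rfl fun a _ => integral_finset_sum _ fun b _ =>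
            (hyy k a b).mul_const _
      _ = ∑ a, ∑ b, S a b * P a b :=
          Finset.sum_congr rfl fun a _ => Finset.sum_congr rfl fun b _ =>
            integral_mul_const _ _
  -- E3 : nonnegativity coming from the Lyapunov condition
  have hE3 : 0 ≤ ∑ a, ∑ b, S a b * (lam ^ 2 • P - Q) a b := by
    have hcalc : ∑ a, ∑ b, S a b * (lam ^ 2 • P - Q) a b
        = ∫ ω, y k ω ⬝ᵥ ((lam ^ 2 • P - Q) *ᵥ y k ω) ∂μ := by
      have hint : ∀ a b, Integrable
          (fun ω => (y k ω a * y k ω b) * (lam ^ 2 • P - Q) a b) μ :=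
        fun a b => (hyy k a b).mul_const _
      calc ∑ a, ∑ b, S a b * (lam ^ 2 • P - Q) a b
          = ∑ a, ∑ b, ∫ ω, (y k ω a * y k ω b) * (lam ^ 2 • P - Q) a b ∂μ :=
            Finset.sum_congr rfl fun a _ => Finset.sum_congr rfl fun b _ =>
              (integral_mul_const _ _).symm
        _ = ∑ a, ∫ ω, ∑ b, (y k ω a * y k ω b) * (lam ^ 2 • P - Q) a b ∂μ :=
            Finset.sum_congr rfl fun a _ =>
              (integral_finset_sum _ fun b _ => hint a b).symm
        _ = ∫ ω, ∑ a, ∑ b, (y k ω a * y k ω b) * (lam ^ 2 • P - Q) a b ∂μ :=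
            (integral_finset_sum _ fun a _ =>
              integrable_finset_sum _ fun b _ => hint a b).symm
        _ = ∫ ω, y k ω ⬝ᵥ ((lam ^ 2 • P - Q) *ᵥ y k ω) ∂μ :=
            integral_congr_ae (Filter.Eventually.of_forall fun ω =>
              (quad_eq (lam ^ 2 • P - Q) (y k ω)).symm)
    rw [hcalc]
    apply integral_nonneg
    intro ω
    have := hR.dotProduct_mulVec_nonneg (y k ω)
    simpa using this
  -- put everything together
  have hsplit : ∑ a, ∑ b, S a b * (lam ^ 2 • P - Q) a b
      = lam ^ 2 * (∑ a, ∑ b, S a b * P a b) - ∑ a, ∑ b, S a b * Q a b := by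
    rw [Finset.mul_sum, ← Finset.sum_sub_distrib]
    refine Finset.sum_congr rfl fun a _ => ?_
    rw [Finset.mul_sum, ← Finset.sum_sub_distrib]
    refine Finset.sum_congr rfl fun b _ => ?_
    simp only [Matrix.sub_apply, Matrix.smul_apply, smul_eq_mul]
    ring
  rw [hE1, hE2]
  rw [hsplit] at hE3
  linarith
end

section
/- Let A be an n×n real matrix, and let A' ∈ R^{n³×n} be formed by stacking the blocks Ā_1,…,Ā_n of a matrix Ā ∈ R^{n²×n²} satisfying ĀᵀĀ = row(A)ᵀ row(A), where row(A) is the row-major vectorization of A. Then for any symmetric n×n matrix P, (A')ᵀ (P ⊗ I_{n²}) A' = Aᵀ P A. -/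
open Matrix
open scoped Kronecker

private lemma sum3_rotate {n : ℕ} (f : Fin n → Fin n → Fin n → ℝ) :
    (∑ a : Fin n, ∑ b : Fin n, ∑ c : Fin n, f a b c)
      = ∑ c : Fin n, ∑ a : Fin n, ∑ b : Fin n, f a b c :=
  calc (∑ a : Fin n, ∑ b : Fin n, ∑ c : Fin n, f a b c)
      = ∑ a : Fin n, ∑ c : Fin n, ∑ b : Fin n, f a b c :=
        Finset.sum_congr rfl fun _ _ => Finset.sum_comm
    _ = ∑ c : Fin n, ∑ a : Fin n, ∑ b : Fin n, f a b c := Finset.sum_comm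

/-- Deterministic case of Lemma 2: if `ĀᵀĀ = row(A)ᵀ row(A)` and `A'` is obtained
by stacking the column blocks of `Ā`, then `(A')ᵀ (P ⊗ I_{n²}) A' = Aᵀ P A`. -/
theorem stacked_decomposition_quadratic_identity
    {n : ℕ} (A : Matrix (Fin n) (Fin n) ℝ)
    (Abar : Matrix (Fin n × Fin n) (Fin n × Fin n) ℝ)
    (hAbar : Abarᵀ * Abar
      = Matrix.vecMulVec (fun p => A p.1 p.2) (fun p => A p.1 p.2))
    (P : Matrix (Fin n) (Fin n) ℝ) (hP : P.IsSymm) :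
    (Matrix.of fun (q : Fin n × (Fin n × Fin n)) (j : Fin n) => Abar q.2 (q.1, j))ᵀ
        * (P ⊗ₖ (1 : Matrix (Fin n × Fin n) (Fin n × Fin n) ℝ))
        * (Matrix.of fun (q : Fin n × (Fin n × Fin n)) (j : Fin n) => Abar q.2 (q.1, j))
      = Aᵀ * P * A := by
  have key : ∀ (a i b j : Fin n),
      (∑ p : Fin n × Fin n, Abar p (a, i) * Abar p (b, j)) = A a i * A b j := by
    intro a i b j
    have := congrFun (congrFun hAbar (a, i)) (b, j)
    simpa [Matrix.mul_apply, Matrix.vecMulVec_apply, Matrix.transpose_apply] using this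
  ext i j
  simp only [Matrix.mul_apply, Matrix.transpose_apply, Matrix.of_apply,
    Matrix.kroneckerMap_apply, Matrix.one_apply, Fintype.sum_prod_type,
    mul_ite, mul_one, mul_zero, ite_mul, zero_mul, Finset.sum_ite_eq,
    Finset.sum_ite_eq', Finset.mem_univ, if_true, Finset.sum_mul, Finset.mul_sum,
    Prod.mk.injEq, ite_and]
  refine Finset.sum_congr rfl fun x _ => ?_
  -- bring the `x_2` sum (row index of `P`) outermost on the left
  have hswap : (∑ x_1 : Fin n, ∑ y : Fin n, ∑ x_2 : Fin n,
        Abar (x_1, y) (x_2, i) * P x_2 x * Abar (x_1, y) (x, j))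
      = ∑ x_2 : Fin n, ∑ x_1 : Fin n, ∑ y : Fin n,
        Abar (x_1, y) (x_2, i) * P x_2 x * Abar (x_1, y) (x, j) := by
    exact sum3_rotate fun x_1 y x_2 => Abar (x_1, y) (x_2, i) * P x_2 x * Abar (x_1, y) (x, j)
  rw [hswap]
  refine Finset.sum_congr rfl fun a _ => ?_
  have : (∑ x_1 : Fin n, ∑ y : Fin n,
        Abar (x_1, y) (a, i) * P a x * Abar (x_1, y) (x, j))
      = (∑ p : Fin n × Fin n, Abar p (a, i) * Abar p (x, j)) * P a x := by
    rw [Fintype.sum_prod_type, Finset.sum_mul]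
    refine Finset.sum_congr rfl fun _ _ => ?_
    rw [Finset.sum_mul]
    exact Finset.sum_congr rfl fun _ _ => mul_right_comm _ _ _
  rw [this, key]
  ring
end
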